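/- Let 𝒰 ⊆ ℝ^d be open, Θ : 𝒰 → ℝ^d Lipschitz with Lipschitz constant L = ‖Θ‖_Lip, and suppose there exist y₀, ỹ₀ ∈ ℝ^d and M, M̃ > 0 with B(ỹ₀,M̃) ⊆ 𝒰 and B(y₀,M) ⊆ Θ(B(ỹ₀,M̃)). Define the finite measure λ_Θ on the Borel sets of ℝ^d by λ_Θ(A) = Leb(Θ^{−1}(A) ∩ B(ỹ₀,M̃)), and let λ_Θ = λ_Θ^{(a)} + λ_Θ^{(s)} be its Lebesgue decomposition with respect to Lebesgue measure, with λ_Θ^{(a)} absolutely continuous and λ_Θ^{(s)} singular. Then any version φ_Θ of the density of λ_Θ^{(a)} with respect to Lebesgue measure satisfies φ_Θ(y) ≥ L^{−d} for Lebesgue-almost every y ∈ B(y₀,M). -/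

import Mathlib

open Real MeasureTheory
open scoped ENNReal NNReal
noncomputable section

/-- if `Θ` is `L`-Lipschitz on an open set containing `B(ỹ₀,M̃)` and the
image `Θ(B(ỹ₀,M̃))` covers `B(y₀,M)`, then any density of the absolutely continuous part
(in the Lebesgue decomposition) of the measure `A ↦ Leb(Θ⁻¹(A) ∩ B(ỹ₀,M̃))` is bounded
below by `L^{-d}` almost everywhere on `B(y₀,M)`. -/
theorem pushforward_density_lower_bound {d : ℕ}
    (𝒰 : Set (EuclideanSpace ℝ (Fin d))) (h𝒰 : IsOpen 𝒰)
    (Θ : EuclideanSpace ℝ (Fin d) → EuclideanSpace ℝ (Fin d))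
    (L : ℝ≥0) (hLip : LipschitzOnWith L Θ 𝒰)
    (y₀ ytil₀ : EuclideanSpace ℝ (Fin d)) (M Mt : ℝ) (hM : 0 < M) (hMt : 0 < Mt)
    (hball : Metric.ball ytil₀ Mt ⊆ 𝒰)
    (hcover : Metric.ball y₀ M ⊆ Θ '' Metric.ball ytil₀ Mt)
    (φ : EuclideanSpace ℝ (Fin d) → ENNReal) (hφ : Measurable φ)
    (ν : Measure (EuclideanSpace ℝ (Fin d))) (hsing : ν ⟂ₘ volume)
    (hdecomp : ∀ A : Set (EuclideanSpace ℝ (Fin d)), MeasurableSet A →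
      volume.withDensity φ A + ν A = volume (Θ ⁻¹' A ∩ Metric.ball ytil₀ Mt)) :
    ∀ᵐ y ∂(volume : Measure (EuclideanSpace ℝ (Fin d))),
      y ∈ Metric.ball y₀ M → ((L : ENNReal) ^ d)⁻¹ ≤ φ y := by
  set B := Metric.ball ytil₀ Mt with hB
  -- Lipschitz on the small ball
  have hLipB : LipschitzOnWith L Θ B := hLip.mono hball
  -- Hausdorff measure is a constant multiple of volume
  set n := Module.finrank ℝ (EuclideanSpace ℝ (Fin d)) with hn
  have hnd : n = d := finrank_euclideanSpace_fin
  set μ : Measure (EuclideanSpace ℝ (Fin d)) := μH[(n : ℝ)] with hμdef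
  have hμHaar : μ.IsAddHaarMeasure := MeasureTheory.isAddHaarMeasure_hausdorffMeasure
  set c : ℝ≥0 := Measure.addHaarScalarFactor μ (volume : Measure (EuclideanSpace ℝ (Fin d))) with hc
  have hcpos : 0 < c :=
    Measure.addHaarScalarFactor_pos_of_isAddHaarMeasure μ _
  have hμeq : μ = c • (volume : Measure (EuclideanSpace ℝ (Fin d))) :=
    Measure.isAddLeftInvariant_eq_smul μ _
  -- Image measure estimate for Lipschitz maps
  have himg : ∀ s : Set (EuclideanSpace ℝ (Fin d)), s ⊆ B →
      volume (Θ '' s) ≤ (L : ℝ≥0∞) ^ d * volume s := by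
    intro s hs
    have h1 : μ (Θ '' s) ≤ (L : ℝ≥0∞) ^ (n : ℝ) * μ s :=
      (hLipB.mono hs).hausdorffMeasure_image_le (by positivity)
    have h2 : (L : ℝ≥0∞) ^ (n : ℝ) = (L : ℝ≥0∞) ^ d := by
      rw [ENNReal.rpow_natCast, hnd]
    rw [h2, hμeq] at h1
    simp only [Measure.smul_apply, ENNReal.smul_def, smul_eq_mul] at h1
    rw [show (L : ℝ≥0∞) ^ d * ((c : ℝ≥0∞) * volume s)
        = (c : ℝ≥0∞) * ((L : ℝ≥0∞) ^ d * volume s) by ring] at h1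
    exact (ENNReal.mul_le_mul_iff_right (by exact_mod_cast hcpos.ne') ENNReal.coe_ne_top).mp h1
  -- key inequality
  have hkey : ∀ A : Set (EuclideanSpace ℝ (Fin d)), A ⊆ Metric.ball y₀ M →
      volume A ≤ (L : ℝ≥0∞) ^ d * volume (Θ ⁻¹' A ∩ B) := by
    intro A hA
    have hsub : A ⊆ Θ '' (Θ ⁻¹' A ∩ B) := by
      intro y hy
      obtain ⟨x, hxB, hxy⟩ := hcover (hA hy)
      exact ⟨x, ⟨by simp [Set.mem_preimage, hxy, hy], hxB⟩, hxy⟩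
    calc volume A ≤ volume (Θ '' (Θ ⁻¹' A ∩ B)) := measure_mono hsub
      _ ≤ (L : ℝ≥0∞) ^ d * volume (Θ ⁻¹' A ∩ B) :=
        himg _ Set.inter_subset_right
  -- degenerate case: L^d = 0
  by_cases hLd : (L : ℝ≥0∞) ^ d = 0
  · exfalso
    have h0 := hkey (Metric.ball y₀ M) le_rfl
    rw [hLd, zero_mul] at h0
    have : volume (Metric.ball y₀ M) = 0 := le_antisymm h0 zero_le
    exact (Metric.measure_ball_pos volume y₀ hM).ne' this
  have hLdtop : (L : ℝ≥0∞) ^ d ≠ ⊤ := by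
    exact (ENNReal.pow_lt_top ENNReal.coe_lt_top).ne
  set I : ℝ≥0∞ := ((L : ℝ≥0∞) ^ d)⁻¹ with hI
  have hIL : I * (L : ℝ≥0∞) ^ d = 1 := ENNReal.inv_mul_cancel hLd hLdtop
  -- singular part
  obtain ⟨T, hTm, hνT, hTc⟩ := hsing
  -- work on the restricted measure
  have hmain : (fun _ : EuclideanSpace ℝ (Fin d) => I) ≤ᵐ[(volume : Measure (EuclideanSpace ℝ (Fin d))).restrict (Metric.ball y₀ M ∩ T)] φ := by
    apply ae_le_of_forall_setLIntegral_le_of_sigmaFinite measurable_const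
    intro s hs _
    have hball_m : MeasurableSet (Metric.ball y₀ M ∩ T) :=
      measurableSet_ball.inter hTm
    rw [Measure.restrict_restrict hs]
    set A := s ∩ (Metric.ball y₀ M ∩ T) with hA
    have hAm : MeasurableSet A := hs.inter hball_m
    have hAsub : A ⊆ Metric.ball y₀ M := fun x hx => hx.2.1
    have hAT : A ⊆ T := fun x hx => hx.2.2
    have hνA : ν A = 0 := le_antisymm ((measure_mono hAT).trans hνT.le) zero_le
    have hlam : volume.withDensity φ A = volume (Θ ⁻¹' A ∩ B) := by
      have := hdecomp A hAm
      rwa [hνA, add_zero] at this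
    have hwd : volume.withDensity φ A = ∫⁻ x in A, φ x := withDensity_apply φ hAm
    calc ∫⁻ _ in A, I ∂(volume : Measure (EuclideanSpace ℝ (Fin d)))
        = I * volume A := by
          simp [lintegral_const, Measure.restrict_apply MeasurableSet.univ]
      _ ≤ I * ((L : ℝ≥0∞) ^ d * volume (Θ ⁻¹' A ∩ B)) := by
          gcongr
          exact hkey A hAsub
      _ = (I * (L : ℝ≥0∞) ^ d) * volume (Θ ⁻¹' A ∩ B) := by ring
      _ = volume (Θ ⁻¹' A ∩ B) := by rw [hIL, one_mul]
      _ = ∫⁻ x in A, φ x ∂(volume : Measure (EuclideanSpace ℝ (Fin d))) := by rw [← hlam, hwd]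
  rw [Filter.EventuallyLE, ae_restrict_iff' (measurableSet_ball.inter hTm)] at hmain
  have hT_ae : ∀ᵐ y ∂(volume : Measure (EuclideanSpace ℝ (Fin d))), y ∈ T := by
    rw [ae_iff]
    exact hTc
  filter_upwards [hmain, hT_ae] with y hy hyT hyball
  exact hy ⟨hyball, hyT⟩
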